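/- Suppose the sequences a_1, ..., a_ℓ : ℕ → ℤ are good for irrational equidistribution, i.e., for all t_1, ..., t_ℓ ∈ [0,1) not all rational, lim_{N→∞} (1/N) ∑_{n=1}^N e(a_1(n)t_1 + ... + a_ℓ(n)t_ℓ) = 0. Fix k ∈ ℕ and for i = 1,...,ℓ define b_i(n) := ∑_{r=0}^{k−1} 1_{kℤ+r}(a_i(n)) · (a_i(n)−r)/k. Then b_1, ..., b_ℓ are also good for irrational equidistribution. -/

import Mathlib

open Filter

/-- The sequences `a₁, …, a_ℓ : ℕ → ℤ` are good for irrational equidistribution: for all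
`t₁, …, t_ℓ ∈ [0,1)` not all rational, `(1/N) ∑_{n=1}^N e(a₁(n)t₁ + ⋯ + a_ℓ(n)t_ℓ) → 0`. -/
def GoodForIrrationalEquidistribution (ℓ : ℕ) (a : Fin ℓ → ℕ → ℤ) : Prop :=
  ∀ t : Fin ℓ → ℝ, (∀ j, t j ∈ Set.Ico (0 : ℝ) 1) → (∃ j, Irrational (t j)) →
    Tendsto (fun N : ℕ => (N : ℂ)⁻¹ * ∑ n ∈ Finset.Icc 1 N,
      Complex.exp (2 * ↑Real.pi * Complex.I * ↑(∑ j, ((a j n : ℤ) : ℝ) * t j))) atTop (nhds 0)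

noncomputable def Efun (x : ℝ) : ℂ := Complex.exp (2 * Real.pi * Complex.I * x)

lemma Efun_add (x y : ℝ) : Efun (x + y) = Efun x * Efun y := by
  simp only [Efun, ← Complex.exp_add]
  push_cast
  ring_nf

lemma Efun_sum {α : Type*} (s : Finset α) (f : α → ℝ) :
    Efun (∑ j ∈ s, f j) = ∏ j ∈ s, Efun (f j) := by
  simp only [Efun]
  push_cast
  rw [Finset.mul_sum, Complex.exp_sum]

lemma Efun_nat_mul (n : ℕ) (x : ℝ) : Efun (n * x) = Efun x ^ n := by
  simp only [Efun, ← Complex.exp_nat_mul]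
  push_cast
  ring_nf

lemma Efun_int (m : ℤ) : Efun m = 1 := by
  simpa [Efun, mul_comm] using Complex.exp_int_mul_two_pi_mul_I m

lemma sum_pow_Efun (k : ℕ) (hk : 0 < k) (m : ℤ) :
    ∑ s ∈ Finset.range k, (Efun ((m : ℝ) / k)) ^ s
      = if (k : ℤ) ∣ m then (k : ℂ) else 0 := by
  have hk0 : (k : ℝ) ≠ 0 := Nat.cast_ne_zero.mpr hk.ne'
  have hk0c : (k : ℂ) ≠ 0 := Nat.cast_ne_zero.mpr hk.ne'
  have hpow : (Efun ((m : ℝ) / k)) ^ k = 1 := by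
    rw [← Efun_nat_mul, mul_div_cancel₀ _ hk0]
    exact Efun_int m
  by_cases hdvd : (k : ℤ) ∣ m
  · obtain ⟨c, rfl⟩ := hdvd
    have : ((k * c : ℤ) : ℝ) / k = (c : ℤ) := by push_cast; field_simp
    rw [this, Efun_int]
    simp
  · have hne : Efun ((m : ℝ) / k) ≠ 1 := by
      intro h
      rw [Efun, Complex.exp_eq_one_iff] at h
      obtain ⟨n, hn⟩ := h
      apply hdvd
      have h2 : (2 * (Real.pi : ℂ) * Complex.I) ≠ 0 := by
        simp [Real.pi_ne_zero, Complex.I_ne_zero]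
      push_cast at hn
      rw [mul_comm ((n : ℂ)) _] at hn
      have hdiv : ((m : ℂ)) / k = n := mul_left_cancel₀ h2 hn
      have hmk : (m : ℂ) = n * k := by
        rw [div_eq_iff hk0c] at hdiv; exact hdiv
      have : m = n * k := by exact_mod_cast hmk
      exact ⟨n, by rw [this]; ring⟩
    rw [geom_sum_eq hne, hpow]
    simp [hdvd]

lemma bval (k : ℕ) (hk : 0 < k) (A : ℤ) :
    (∑ r ∈ Finset.range k, if A % (k : ℤ) = (r : ℤ) then (A - (r : ℤ)) / (k : ℤ) else 0)
      = A / (k : ℤ) := by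
  have h0 : 0 ≤ A % k := Int.emod_nonneg A (by exact_mod_cast hk.ne')
  have h1 : A % k < k := Int.emod_lt_of_pos A (by exact_mod_cast hk)
  rw [Finset.sum_eq_single (A % k).toNat]
  · have : ((A % k).toNat : ℤ) = A % k := Int.toNat_of_nonneg h0
    rw [if_pos this.symm, this]
    have h2 := Int.mul_ediv_add_emod A k
    have h3 : A - A % k = k * (A / k) := by linarith
    rw [h3, Int.mul_ediv_cancel_left _ (by exact_mod_cast hk.ne')]
  · intro r _ hr
    rw [if_neg]
    intro h
    apply hr
    omega
  · intro h
    exact absurd (Finset.mem_range.mpr (by omega)) h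

lemma keyj (k : ℕ) (hk : 0 < k) (A : ℤ) (t : ℝ) :
    ((k : ℂ))⁻¹ * ∑ s ∈ Finset.range k, ∑ ρ ∈ Finset.range k,
      Efun (((A - (ρ : ℤ) : ℤ) : ℝ) * ((t + (s : ℕ)) / k))
      = Efun (((A / (k : ℤ) : ℤ) : ℝ) * t) := by
  have hk0 : (k : ℝ) ≠ 0 := Nat.cast_ne_zero.mpr hk.ne'
  have hk0c : (k : ℂ) ≠ 0 := Nat.cast_ne_zero.mpr hk.ne'
  rw [Finset.sum_comm]
  have inner : ∀ ρ ∈ Finset.range k,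
      ∑ s ∈ Finset.range k, Efun (((A - (ρ : ℤ) : ℤ) : ℝ) * ((t + (s : ℕ)) / k))
        = Efun (((A - (ρ : ℤ) : ℤ) : ℝ) * t / k) * (if (k : ℤ) ∣ (A - ρ) then (k : ℂ) else 0) := by
    intro ρ _
    calc ∑ s ∈ Finset.range k, Efun (((A - (ρ : ℤ) : ℤ) : ℝ) * ((t + (s : ℕ)) / k))
        = ∑ s ∈ Finset.range k, Efun (((A - (ρ : ℤ) : ℤ) : ℝ) * t / k)
            * (Efun (((A - (ρ : ℤ) : ℤ) : ℝ) / k)) ^ s := by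
          refine Finset.sum_congr rfl fun s _ => ?_
          rw [← Efun_nat_mul, ← Efun_add]
          congr 1
          push_cast
          ring
      _ = _ := by rw [← Finset.mul_sum, sum_pow_Efun k hk (A - ρ)]
  rw [Finset.sum_congr rfl inner]
  have h0 : 0 ≤ A % k := Int.emod_nonneg A (by exact_mod_cast hk.ne')
  have h1 : A % k < k := Int.emod_lt_of_pos A (by exact_mod_cast hk)
  have h2 := Int.mul_ediv_add_emod A k
  rw [Finset.sum_eq_single (A % k).toNat]
  · have hc : ((A % k).toNat : ℤ) = A % k := Int.toNat_of_nonneg h0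
    have h3 : A - ((A % k).toNat : ℤ) = k * (A / k) := by omega
    rw [if_pos (by rw [h3]; exact ⟨A / k, rfl⟩), h3]
    have h4 : ((k * (A / k) : ℤ) : ℝ) * t / k = ((A / (k : ℤ) : ℤ) : ℝ) * t := by
      push_cast
      field_simp
    rw [h4]
    field_simp
  · intro r hr hne
    rw [if_neg, mul_zero]
    rintro ⟨c, hc⟩
    apply hne
    have hrk : (r : ℤ) < k := by exact_mod_cast Finset.mem_range.mp hr
    have : A % k = (r : ℤ) := by
      have : A = k * c + r := by omega
      rw [this, add_comm, Int.add_mul_emod_self_left, Int.emod_eq_of_lt (by positivity) hrk]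
    omega
  · intro h
    exact absurd (Finset.mem_range.mpr (by omega)) h

lemma key_id (ℓ k : ℕ) (hk : 0 < k) (A : Fin ℓ → ℤ) (t : Fin ℓ → ℝ) :
    Efun (∑ j, ((A j / (k : ℤ) : ℤ) : ℝ) * t j)
      = ∑ g ∈ Fintype.piFinset (fun _ : Fin ℓ => Finset.range k),
          (∏ j, ((k : ℂ))⁻¹ * ∑ ρ ∈ Finset.range k, Efun (-(ρ : ℝ) * ((t j + (g j : ℕ)) / k)))
            * Efun (∑ j, ((A j : ℤ) : ℝ) * ((t j + (g j : ℕ)) / k)) := by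
  rw [Efun_sum]
  have h1 : ∀ j, Efun (((A j / (k : ℤ) : ℤ) : ℝ) * t j)
      = ∑ s ∈ Finset.range k,
          (((k : ℂ))⁻¹ * ∑ ρ ∈ Finset.range k, Efun (-(ρ : ℝ) * ((t j + (s : ℕ)) / k)))
            * Efun (((A j : ℤ) : ℝ) * ((t j + (s : ℕ)) / k)) := by
    intro j
    rw [← keyj k hk (A j) (t j), Finset.mul_sum]
    refine Finset.sum_congr rfl fun s _ => ?_
    have : ∀ ρ ∈ Finset.range k,
        Efun (((A j - (ρ : ℤ) : ℤ) : ℝ) * ((t j + (s : ℕ)) / k))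
          = Efun (-(ρ : ℝ) * ((t j + (s : ℕ)) / k)) * Efun (((A j : ℤ) : ℝ) * ((t j + (s : ℕ)) / k)) := by
      intro ρ _
      rw [← Efun_add]
      congr 1
      push_cast
      ring
    rw [Finset.sum_congr rfl this, ← Finset.sum_mul]
    ring
  calc ∏ j, Efun (((A j / (k : ℤ) : ℤ) : ℝ) * t j)
      = ∏ j, ∑ s ∈ Finset.range k,
          (((k : ℂ))⁻¹ * ∑ ρ ∈ Finset.range k, Efun (-(ρ : ℝ) * ((t j + (s : ℕ)) / k)))
            * Efun (((A j : ℤ) : ℝ) * ((t j + (s : ℕ)) / k)) := by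
        exact Finset.prod_congr rfl fun j _ => h1 j
    _ = _ := by
        rw [Finset.prod_univ_sum]
        refine Finset.sum_congr rfl fun g _ => ?_
        rw [Finset.prod_mul_distrib, Efun_sum]

/-- If `a₁, …, a_ℓ` are good for irrational equidistribution and `k ≥ 1`, then so are the
sequences `b_i(n) = ∑_{r=0}^{k-1} 1_{kℤ+r}(a_i(n)) (a_i(n) − r)/k` (the integer quotients of
the `a_i(n)` by `k`). -/
theorem stmt15 (ℓ : ℕ) (a : Fin ℓ → ℕ → ℤ)
    (ha : GoodForIrrationalEquidistribution ℓ a) (k : ℕ) (hk : 0 < k) :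
    GoodForIrrationalEquidistribution ℓ (fun i n => ∑ r ∈ Finset.range k,
      if a i n % (k : ℤ) = (r : ℤ) then (a i n - (r : ℤ)) / (k : ℤ) else 0) := by
  intro t ht htirr
  simp only [bval k hk]
  have hkpos : (0 : ℝ) < k := by exact_mod_cast hk
  set P := Fintype.piFinset (fun _ : Fin ℓ => Finset.range k) with hP
  set C : (Fin ℓ → ℕ) → ℂ := fun g =>
    ∏ j, ((k : ℂ))⁻¹ * ∑ ρ ∈ Finset.range k, Efun (-(ρ : ℝ) * ((t j + (g j : ℕ)) / k)) with hC
  have heq : ∀ N : ℕ,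
      ∑ g ∈ P, C g * ((N : ℂ)⁻¹ * ∑ n ∈ Finset.Icc 1 N,
          Efun (∑ j, ((a j n : ℤ) : ℝ) * ((t j + (g j : ℕ)) / k)))
      = (N : ℂ)⁻¹ * ∑ n ∈ Finset.Icc 1 N,
          Efun (∑ j, ((a j n / (k : ℤ) : ℤ) : ℝ) * t j) := by
    intro N
    have step : ∀ n ∈ Finset.Icc 1 N,
        Efun (∑ j, ((a j n / (k : ℤ) : ℤ) : ℝ) * t j)
          = ∑ g ∈ P, C g * Efun (∑ j, ((a j n : ℤ) : ℝ) * ((t j + (g j : ℕ)) / k)) :=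
      fun n _ => key_id ℓ k hk (fun j => a j n) t
    rw [Finset.sum_congr rfl step, Finset.sum_comm, Finset.mul_sum]
    refine Finset.sum_congr rfl fun g _ => ?_
    rw [← Finset.mul_sum]
    ring
  have hlim : Tendsto (fun N : ℕ => ∑ g ∈ P, C g * ((N : ℂ)⁻¹ * ∑ n ∈ Finset.Icc 1 N,
      Efun (∑ j, ((a j n : ℤ) : ℝ) * ((t j + (g j : ℕ)) / k)))) atTop
      (nhds (∑ g ∈ P, C g * 0)) := by
    refine tendsto_finset_sum P fun g hg => Tendsto.const_mul _ ?_
    have hgmem : ∀ j, g j < k := fun j =>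
      Finset.mem_range.mp ((Fintype.mem_piFinset.mp hg) j)
    refine ha (fun j => (t j + (g j : ℕ)) / k) (fun j => ?_) ?_
    · constructor
      · exact div_nonneg (add_nonneg (ht j).1 (Nat.cast_nonneg _)) hkpos.le
      · rw [div_lt_one hkpos]
        have h1 : (t j) < 1 := (ht j).2
        have h2 : ((g j : ℕ) : ℝ) + 1 ≤ (k : ℝ) := by exact_mod_cast hgmem j
        linarith
    · obtain ⟨j, hj⟩ := htirr
      exact ⟨j, (hj.add_natCast (g j)).div_natCast hk.ne'⟩
  simp only [mul_zero, Finset.sum_const_zero] at hlim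
  exact Tendsto.congr heq hlim
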